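/- Let Ω ⊆ ℝ^{N+1} (with the Euclidean inner product (·,·)_E) be a transitive state space with only finitely many extreme points, whose positive cone V₊ is self-dual with respect to some inner product on ℝ^{N+1}. Then there exists a linear bijection Ξ : ℝ^{N+1} → ℝ^{N+1} such that Ω' := Ξ(Ω) is a transitive state space and its positive cone V₊' is self-dual with respect to the invariant inner product ⟨x, y⟩_{GL(Ω')} := (1/|GL(Ω')|) ∑_{T ∈ GL(Ω')} (T x, T y)_E, i.e. V₊' = {y : ⟨x, y⟩_{GL(Ω')} ≥ 0 for all x ∈ V₊'}. (Here GL(Ω') is a finite group, since a state space with finitely many extreme points has a finite automorphism group.) -/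

import Mathlib

open RealInnerProductSpace

variable {V : Type*} [NormedAddCommGroup V] [InnerProductSpace ℝ V] [FiniteDimensional ℝ V]

/-- A state space: nonempty compact convex set whose affine hull misses `0` and has
dimension `dim V - 1` (so it spans `V`). -/
def IsStateSpace (Ω : Set V) : Prop :=
  Ω.Nonempty ∧ IsCompact Ω ∧ Convex ℝ Ω ∧ (0 : V) ∉ affineSpan ℝ Ω ∧
    Module.finrank ℝ (vectorSpan ℝ Ω) + 1 = Module.finrank ℝ V

/-- The group `GL(Ω)` of linear bijections preserving `Ω`. -/
def autGroup (Ω : Set V) : Set (V ≃ₗ[ℝ] V) := {T | T '' Ω = Ω}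

/-- Transitivity of the action of `GL(Ω)` on the extreme points of `Ω`. -/
def IsTransitive (Ω : Set V) : Prop :=
  ∀ ω₁ ∈ Set.extremePoints ℝ Ω, ∀ ω₂ ∈ Set.extremePoints ℝ Ω,
    ∃ T ∈ autGroup Ω, T ω₁ = ω₂

/-- The inner product of `V` is invariant under `GL(Ω)`. -/
def InvariantInner (Ω : Set V) : Prop :=
  ∀ T ∈ autGroup Ω, ∀ x y : V, ⟪T x, T y⟫ = ⟪x, y⟫

/-- The positive cone generated by `Ω`. -/
def posCone (Ω : Set V) : Set V := {x | ∃ l : ℝ, ∃ ω ∈ Ω, 0 ≤ l ∧ x = l • ω}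

/-- Self-duality of the positive cone with respect to the inner product of `V`. -/
def SelfDualCone (Ω : Set V) : Prop :=
  posCone Ω = {y | ∀ x ∈ posCone Ω, 0 ≤ ⟪x, y⟫}

/-- An effect on `Ω`. -/
def IsEffect (Ω : Set V) (e : V) : Prop := ∀ ω ∈ Ω, 0 ≤ ⟪e, ω⟫ ∧ ⟪e, ω⟫ ≤ 1

/-- A measurement with outcome set `A`: a family of nonzero effects summing to the
unit effect `ωM`. -/
def IsMeasurement (Ω : Set V) (ωM : V) {A : Type*} [Fintype A] (f : A → V) : Prop :=
  (∀ a, f a ≠ 0 ∧ IsEffect Ω (f a)) ∧ ∑ a, f a = ωM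

/-- An ideal measurement. -/
def IsIdeal (Ω : Set V) (ωM : V) {A : Type*} [Fintype A] (f : A → V) : Prop :=
  IsMeasurement Ω ωM f ∧
    ∃ c : ℝ, 0 < c ∧ (∀ ω ∈ Set.extremePoints ℝ Ω, ‖ω‖ = c) ∧
      ∀ a, ∃ S : Finset V, ↑S ⊆ Set.extremePoints ℝ Ω ∧
        (f a = (c ^ 2)⁻¹ • ∑ ω' ∈ S, ω' ∨ f a = ωM - (c ^ 2)⁻¹ • ∑ ω' ∈ S, ω')

/-- First marginal of a joint measurement. -/
def margF {A B : Type*} [Fintype B] (m : A × B → V) : A → V := fun a => ∑ b, m (a, b)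

/-- Second marginal of a joint measurement. -/
def margG {A B : Type*} [Fintype A] (m : A × B → V) : B → V := fun b => ∑ a, m (a, b)

open Classical in
/-- `∑_{a' : d(a',a) ≤ w/2} ⟪f a', ω⟫`. -/
noncomputable def ballSum {A : Type*} [Fintype A] [MetricSpace A]
    (f : A → V) (ω : V) (a : A) (w : ℝ) : ℝ :=
  ∑ a' ∈ Finset.univ.filter (fun x => dist x a ≤ w / 2), ⟪f a', ω⟫

/-- Overall width of the distribution of `f` on `ω` at confidence level `1 - ε`. -/
noncomputable def overallWidth {A : Type*} [Fintype A] [MetricSpace A]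
    (f : A → V) (ω : V) (ε : ℝ) : ℝ :=
  sInf {w : ℝ | 0 < w ∧ ∃ a : A, 1 - ε ≤ ballSum f ω a w}

/-- Error bar width of `ft` relative to `f`. -/
noncomputable def errorBarWidth (Ω : Set V) {A : Type*} [Fintype A] [MetricSpace A]
    (ft f : A → V) (ε : ℝ) : ℝ :=
  sInf {w : ℝ | 0 < w ∧ ∀ a : A, ∀ ω ∈ Ω, ⟪f a, ω⟫ = 1 → 1 - ε ≤ ballSum ft ω a w}

/-- Werner's measure `D_W(ft, f)`. -/
noncomputable def wernerD (Ω : Set V) {A : Type*} [Fintype A] [MetricSpace A]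
    (ft f : A → V) : ℝ :=
  sSup {d : ℝ | ∃ ω ∈ Ω, ∃ h : A → ℝ, (∀ a₁ a₂ : A, |h a₁ - h a₂| ≤ dist a₁ a₂) ∧
    d = |∑ a, h a * (⟪ft a, ω⟫ - ⟪f a, ω⟫)|}

/-- `l∞` distance `D_∞(ft, f)`. -/
noncomputable def dInfty (Ω : Set V) {A : Type*} (ft f : A → V) : ℝ :=
  sSup {d : ℝ | ∃ ω ∈ Ω, ∃ a : A, d = |⟪ft a, ω⟫ - ⟪f a, ω⟫|}

/-- Minimum localization error `LE(ω^F)`. -/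
noncomputable def locError {A : Type*} [Fintype A] [Nonempty A] (f : A → V) (ω : V) : ℝ :=
  1 - Finset.univ.sup' Finset.univ_nonempty (fun a => ⟪f a, ω⟫)

section AuxLemmas
set_option linter.unusedSectionVars false

lemma posCone_image (Ξ : V ≃ₗ[ℝ] V) (Ω : Set V) : posCone (Ξ '' Ω) = Ξ '' posCone Ω := by
  ext x
  constructor
  · rintro ⟨l, ω, ⟨ω₀, hω₀, rfl⟩, hl, rfl⟩
    exact ⟨l • ω₀, ⟨l, ω₀, hω₀, hl, rfl⟩, map_smul Ξ l ω₀⟩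
  · rintro ⟨x, ⟨l, ω, hω, hl, rfl⟩, rfl⟩
    exact ⟨l, Ξ ω, ⟨ω, hω, rfl⟩, hl, map_smul Ξ l ω⟩

lemma isStateSpace_image {Ω : Set V} (hΩ : IsStateSpace Ω) (Ξ : V ≃ₗ[ℝ] V) :
    IsStateSpace (Ξ '' Ω) := by
  obtain ⟨hne, hcomp, hconv, h0, hrank⟩ := hΩ
  have hc : Continuous Ξ := Ξ.toLinearMap.continuous_of_finiteDimensional
  refine ⟨hne.image Ξ, hcomp.image hc, hconv.linear_image Ξ.toLinearMap, ?_, ?_⟩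
  · intro h
    apply h0
    have himg : Ξ '' Ω = Ξ.toAffineMap '' Ω := rfl
    rw [himg, ← AffineSubspace.map_span] at h
    obtain ⟨y, hy, hy0⟩ := h
    have : y = 0 := by
      have := congrArg Ξ.symm hy0
      simpa using this
    rwa [this] at hy
  · have himg : Ξ '' Ω = Ξ.toAffineMap '' Ω := rfl
    rw [himg, ← AffineMap.vectorSpan_image_eq_submodule_map]
    have : Module.finrank ℝ ((vectorSpan ℝ Ω).map (Ξ.toAffineMap.linear)) =
        Module.finrank ℝ (vectorSpan ℝ Ω) := LinearEquiv.finrank_map_eq Ξ _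
    rw [this]
    exact hrank

lemma isTransitive_image {Ω : Set V} (htrans : IsTransitive Ω) (Ξ : V ≃ₗ[ℝ] V) :
    IsTransitive (Ξ '' Ω) := by
  intro ω₁ hω₁ ω₂ hω₂
  rw [← image_extremePoints] at hω₁ hω₂
  obtain ⟨σ₁, hσ₁, rfl⟩ := hω₁
  obtain ⟨σ₂, hσ₂, rfl⟩ := hω₂
  obtain ⟨T, hT, hTσ⟩ := htrans σ₁ hσ₁ σ₂ hσ₂
  refine ⟨(Ξ.symm.trans T).trans Ξ, ?_, by simp [hTσ]⟩
  show ((Ξ.symm.trans T).trans Ξ) '' (Ξ '' Ω) = Ξ '' Ω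
  have : ∀ x, ((Ξ.symm.trans T).trans Ξ) x = Ξ (T (Ξ.symm x)) := fun x => rfl
  rw [Set.image_congr' this]
  rw [Set.image_image]
  have : (fun x => Ξ (T (Ξ.symm (Ξ x)))) = fun x => Ξ (T x) := by
    funext x; rw [Ξ.symm_apply_apply]
  rw [this, ← Set.image_image Ξ T, hT]

lemma subset_posCone (Ω : Set V) : Ω ⊆ posCone Ω :=
  fun ω hω => ⟨1, ω, hω, zero_le_one, (one_smul ℝ ω).symm⟩

lemma posCone_smul_mem {Ω : Set V} {x : V} (hx : x ∈ posCone Ω) {c : ℝ} (hc : 0 ≤ c) :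
    c • x ∈ posCone Ω := by
  obtain ⟨l, ω, hω, hl, rfl⟩ := hx
  exact ⟨c * l, ω, hω, mul_nonneg hc hl, (mul_smul c l ω).symm⟩

lemma posCone_add_mem {Ω : Set V} (hconv : Convex ℝ Ω) {x y : V}
    (hx : x ∈ posCone Ω) (hy : y ∈ posCone Ω) : x + y ∈ posCone Ω := by
  obtain ⟨l, ω, hω, hl, rfl⟩ := hx
  obtain ⟨m, σ, hσ, hm, rfl⟩ := hy
  rcases eq_or_lt_of_le (add_nonneg hl hm : (0:ℝ) ≤ l + m) with h | h
  · have hl0 : l = 0 := by linarith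
    have hm0 : m = 0 := by linarith
    refine ⟨0, ω, hω, le_refl 0, by simp [hl0, hm0]⟩
  · refine ⟨l + m, (l/(l+m)) • ω + (m/(l+m)) • σ,
      hconv hω hσ (by positivity) (by positivity) (by field_simp), le_of_lt h, ?_⟩
    rw [smul_add, smul_smul, smul_smul]
    rw [mul_div_assoc', mul_div_assoc', mul_comm (l+m) l, mul_comm (l+m) m,
      mul_div_assoc, mul_div_assoc, div_self (ne_of_gt h), mul_one, mul_one]

lemma exists_unit {Ω : Set V} (hΩ : IsStateSpace Ω) : ∃ u : V, ∀ ω ∈ Ω, ⟪u, ω⟫ = 1 := by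
  obtain ⟨⟨ω₀, hω₀⟩, _, _, h0, _⟩ := hΩ
  set W := vectorSpan ℝ Ω with hW
  have hω₀W : ω₀ ∉ W := by
    intro h
    apply h0
    have h₁ : ω₀ ∈ affineSpan ℝ Ω := subset_affineSpan ℝ Ω hω₀
    rw [← AffineSubspace.vsub_right_mem_direction_iff_mem h₁ 0, direction_affineSpan]
    show (0:V) -ᵥ ω₀ ∈ W
    have : (0:V) -ᵥ ω₀ = -ω₀ := by simp
    rw [this]
    exact W.neg_mem h
  set v : V := (Submodule.orthogonalProjectionOnto Wᗮ ω₀ : V) with hv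
  have hv0 : v ≠ 0 := by
    intro h
    apply hω₀W
    have : Submodule.orthogonalProjectionOnto Wᗮ ω₀ = 0 := Subtype.ext h
    rw [Submodule.orthogonalProjectionOnto_eq_zero_iff] at this
    rwa [Submodule.orthogonal_orthogonal] at this
  have hvW : v ∈ Wᗮ := (Submodule.orthogonalProjectionOnto Wᗮ ω₀).2
  have hrest : ω₀ - v ∈ W := by
    have := Submodule.sub_starProjection_mem_orthogonal (K := Wᗮ) ω₀
    rwa [Submodule.orthogonal_orthogonal] at this
  have hvω₀ : ⟪v, ω₀⟫ = ‖v‖^2 := by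
    have h1 : ⟪v, ω₀ - v⟫ = 0 := by
      rw [real_inner_comm]
      exact hvW (ω₀ - v) hrest
    rw [inner_sub_right] at h1
    have h2 : ⟪v, v⟫ = ‖v‖^2 := real_inner_self_eq_norm_sq v
    linarith
  have hpos : 0 < ⟪v, ω₀⟫ := by
    rw [hvω₀]
    exact pow_pos (norm_pos_iff.mpr hv0) 2
  refine ⟨(⟪v, ω₀⟫)⁻¹ • v, fun ω hω => ?_⟩
  have hdiff : ω - ω₀ ∈ W := by
    have := vsub_mem_vectorSpan ℝ hω hω₀
    simpa using this
  have : ⟪v, ω⟫ = ⟪v, ω₀⟫ := by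
    have h1 : ⟪v, ω - ω₀⟫ = 0 := by
      rw [real_inner_comm]; exact hvW (ω - ω₀) hdiff
    rw [inner_sub_right] at h1
    linarith
  rw [real_inner_smul_left, this, inv_mul_cancel₀ (ne_of_gt hpos)]

lemma span_posCone_top {Ω : Set V} (hΩ : IsStateSpace Ω) : Submodule.span ℝ Ω = ⊤ := by
  obtain ⟨⟨ω₀, hω₀⟩, _, _, h0, hrank⟩ := hΩ
  have hWle : vectorSpan ℝ Ω ≤ Submodule.span ℝ Ω := by
    rw [vectorSpan_def]
    refine Submodule.span_le.2 ?_
    intro x hx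
    rw [Set.mem_vsub] at hx
    obtain ⟨a, ha, b, hb, rfl⟩ := hx
    exact sub_mem (Submodule.subset_span ha) (Submodule.subset_span hb)
  have hω₀W : ω₀ ∉ vectorSpan ℝ Ω := by
    intro h
    apply h0
    have h₁ : ω₀ ∈ affineSpan ℝ Ω := subset_affineSpan ℝ Ω hω₀
    rw [← AffineSubspace.vsub_right_mem_direction_iff_mem h₁ 0, direction_affineSpan]
    have : (0:V) -ᵥ ω₀ = -ω₀ := by simp
    rw [this]
    exact (vectorSpan ℝ Ω).neg_mem h
  have hlt : vectorSpan ℝ Ω < Submodule.span ℝ Ω :=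
    lt_of_le_of_ne hWle (fun h => hω₀W (h ▸ Submodule.subset_span hω₀))
  have h1 : Module.finrank ℝ (vectorSpan ℝ Ω) < Module.finrank ℝ (Submodule.span ℝ Ω) :=
    Submodule.finrank_lt_finrank_of_lt hlt
  apply Submodule.eq_top_of_finrank_eq
  have h2 : Module.finrank ℝ (Submodule.span ℝ Ω) ≤ Module.finrank ℝ V :=
    Submodule.finrank_le _
  omega

lemma convexHull_extremePoints_eq {Ω : Set V} (hΩ : IsStateSpace Ω)
    (hfin : (Set.extremePoints ℝ Ω).Finite) :
    convexHull ℝ (Set.extremePoints ℝ Ω) = Ω := by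
  have h := closure_convexHull_extremePoints hΩ.2.1 hΩ.2.2.1
  rwa [IsClosed.closure_eq (hfin.isClosed_convexHull (𝕜 := ℝ))] at h

lemma span_extremePoints_top {Ω : Set V} (hΩ : IsStateSpace Ω)
    (hfin : (Set.extremePoints ℝ Ω).Finite) :
    Submodule.span ℝ (Set.extremePoints ℝ Ω) = ⊤ := by
  refine le_antisymm le_top ?_
  rw [← span_posCone_top hΩ]
  refine Submodule.span_le.2 ?_
  intro x hx
  rw [← convexHull_extremePoints_eq hΩ hfin] at hx
  exact convexHull_min Submodule.subset_span (Submodule.convex _) hx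

lemma autGroup_finite {Ω : Set V} (hΩ : IsStateSpace Ω)
    (hfin : (Set.extremePoints ℝ Ω).Finite) : (autGroup Ω).Finite := by
  set E := Set.extremePoints ℝ Ω with hE
  have hspan : Submodule.span ℝ E = ⊤ := span_extremePoints_top hΩ hfin
  have hmap : ∀ T ∈ autGroup Ω, ∀ x ∈ E, T x ∈ E := by
    intro T hT x hx
    have h1 : (T : V ≃ₗ[ℝ] V) '' E = E := by
      rw [hE, image_extremePoints, hT]
    rw [← h1]
    exact ⟨x, hx, rfl⟩
  haveI : Finite ↥E := hfin.to_subtype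
  rw [← Set.finite_coe_iff]
  refine Finite.of_injective
    (fun (T : ↥(autGroup Ω)) (x : ↥E) => (⟨T.1 x.1, hmap T.1 T.2 x.1 x.2⟩ : ↥E)) ?_
  intro T₁ T₂ h
  apply Subtype.ext
  apply LinearEquiv.toLinearMap_injective
  apply LinearMap.ext_on hspan
  intro x hx
  exact congrArg Subtype.val (congrFun h ⟨x, hx⟩)

lemma exists_inner_equiv (B : V →ₗ[ℝ] V →ₗ[ℝ] ℝ) (hsymm : ∀ x y, B x y = B y x)
    (hpos : ∀ x, x ≠ 0 → 0 < B x x) :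
    ∃ Ξ : V ≃ₗ[ℝ] V, ∀ x y, ⟪Ξ x, Ξ y⟫ = B x y := by
  have hsymm' : B.IsSymm := ⟨fun x y => by simpa using hsymm x y⟩
  obtain ⟨v, hv⟩ := LinearMap.BilinForm.exists_orthogonal_basis hsymm'
  have hd : ∀ i, 0 < B (v i) (v i) := fun i => hpos _ (v.ne_zero i)
  set c : Fin (Module.finrank ℝ V) → ℝˣ := fun i =>
    Units.mk0 ((Real.sqrt (B (v i) (v i)))⁻¹)
      (inv_ne_zero (ne_of_gt (Real.sqrt_pos.mpr (hd i)))) with hc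
  set b := v.unitsSMul c with hb
  have hbij : ∀ i j, B (b i) (b j) = if i = j then 1 else 0 := by
    intro i j
    have hbi : ∀ k, b k = (c k : ℝ) • v k := fun k => by
      rw [hb, Module.Basis.unitsSMul_apply, Units.smul_def]
    rw [hbi i, hbi j]
    simp only [map_smul, LinearMap.smul_apply, smul_eq_mul]
    by_cases hij : i = j
    · subst hij
      rw [if_pos rfl, hc]
      simp only [Units.val_mk0]
      have h1 : Real.sqrt (B (v i) (v i)) * Real.sqrt (B (v i) (v i)) = B (v i) (v i) :=
        Real.mul_self_sqrt (le_of_lt (hd i))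
      have h2 : Real.sqrt (B (v i) (v i)) ≠ 0 := ne_of_gt (Real.sqrt_pos.mpr (hd i))
      field_simp
      rw [sq, h1]
    · rw [if_neg hij]
      have h0 : B (v i) (v j) = 0 := hv hij
      rw [h0]
      ring
  set e := stdOrthonormalBasis ℝ V with he
  set Ξ := b.equiv e.toBasis (Equiv.refl _) with hΞ
  refine ⟨Ξ, ?_⟩
  have hΞb : ∀ i, Ξ (b i) = e i := by
    intro i
    rw [hΞ, Module.Basis.equiv_apply, Equiv.refl_apply, OrthonormalBasis.coe_toBasis]
  set M : V →ₗ[ℝ] V →ₗ[ℝ] ℝ := LinearMap.mk₂ ℝ (fun x y => ⟪Ξ x, Ξ y⟫)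
    (fun x x' y => by simp only [map_add, inner_add_left])
    (fun a x y => by simp only [map_smul, real_inner_smul_left, smul_eq_mul])
    (fun x y y' => by simp only [map_add, inner_add_right])
    (fun a x y => by simp only [map_smul, real_inner_smul_right, smul_eq_mul]) with hM
  have : M = B := by
    apply Module.Basis.ext b
    intro i
    apply Module.Basis.ext b
    intro j
    have hMij : M (b i) (b j) = ⟪Ξ (b i), Ξ (b j)⟫ := rfl
    rw [hMij, hΞb, hΞb, hbij i j]
    exact orthonormal_iff_ite.mp e.orthonormal i j
  intro x y
  have : M x y = B x y := by rw [this]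
  exact this

lemma selfdual_transport {Ω : Set V} (B : V →ₗ[ℝ] V →ₗ[ℝ] ℝ)
    (hsd : posCone Ω = {y | ∀ x ∈ posCone Ω, 0 ≤ B x y})
    (Ξ : V ≃ₗ[ℝ] V) (hΞ : ∀ x y, ⟪Ξ x, Ξ y⟫ = B x y) :
    posCone (Ξ '' Ω) = {y | ∀ x ∈ posCone (Ξ '' Ω), 0 ≤ ⟪x, y⟫} := by
  rw [posCone_image]
  ext y
  constructor
  · rintro ⟨y₀, hy₀, rfl⟩ x ⟨x₀, hx₀, rfl⟩
    rw [hΞ]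
    have h1 : y₀ ∈ {y | ∀ x ∈ posCone Ω, 0 ≤ B x y} := hsd ▸ hy₀
    exact h1 x₀ hx₀
  · intro hy
    refine ⟨Ξ.symm y, ?_, by simp⟩
    rw [hsd]
    intro x hx
    have h1 := hy (Ξ x) ⟨x, hx, rfl⟩
    have h2 : ⟪Ξ x, y⟫ = B x (Ξ.symm y) := by
      conv_lhs => rw [show y = Ξ (Ξ.symm y) by simp]
      exact hΞ x (Ξ.symm y)
    rwa [h2] at h1

lemma posCone_pair_nonneg {Ω : Set V}
    (hsd : posCone Ω = {y | ∀ x ∈ posCone Ω, 0 ≤ ⟪x, y⟫})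
    {x y : V} (hx : x ∈ posCone Ω) (hy : y ∈ posCone Ω) : 0 ≤ ⟪x, y⟫ := by
  have h1 : y ∈ {y | ∀ x ∈ posCone Ω, 0 ≤ ⟪x, y⟫} := hsd ▸ hy
  exact h1 x hx

lemma autGroup_posCone {Ω : Set V} {T : V ≃ₗ[ℝ] V} (hT : T ∈ autGroup Ω) :
    T '' posCone Ω = posCone Ω := by
  have h : (T : V ≃ₗ[ℝ] V) '' posCone Ω = posCone (T '' Ω) := (posCone_image T Ω).symm
  rw [h, hT]

lemma autGroup_symm_mem {Ω : Set V} {T : V ≃ₗ[ℝ] V} (hT : T ∈ autGroup Ω) :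
    T.symm ∈ autGroup Ω := by
  show T.symm '' Ω = Ω
  have := congrArg (fun s => T.symm '' s) hT
  simpa [Set.image_image] using this.symm

lemma adjoint_posCone_mem {Ω : Set V}
    (hsd : posCone Ω = {y | ∀ x ∈ posCone Ω, 0 ≤ ⟪x, y⟫})
    {T : V ≃ₗ[ℝ] V} (hT : T ∈ autGroup Ω) {y : V} (hy : y ∈ posCone Ω) :
    LinearMap.adjoint (T : V →ₗ[ℝ] V) y ∈ posCone Ω := by
  rw [hsd]
  intro x hx
  rw [LinearMap.adjoint_inner_right]
  have hTx : (T : V ≃ₗ[ℝ] V) x ∈ posCone Ω := by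
    rw [← autGroup_posCone hT]; exact ⟨x, hx, rfl⟩
  exact posCone_pair_nonneg hsd hTx hy

lemma adjoint_posCone_image {Ω : Set V}
    (hsd : posCone Ω = {y | ∀ x ∈ posCone Ω, 0 ≤ ⟪x, y⟫})
    {T : V ≃ₗ[ℝ] V} (hT : T ∈ autGroup Ω) :
    LinearMap.adjoint (T : V →ₗ[ℝ] V) '' posCone Ω = posCone Ω := by
  apply Set.Subset.antisymm
  · rintro y ⟨x, hx, rfl⟩
    exact adjoint_posCone_mem hsd hT hx
  · intro y hy
    refine ⟨LinearMap.adjoint (T.symm : V →ₗ[ℝ] V) y,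
      adjoint_posCone_mem hsd (autGroup_symm_mem hT) hy, ?_⟩
    rw [← LinearMap.comp_apply, ← LinearMap.adjoint_comp]
    have hcomp : (T.symm : V →ₗ[ℝ] V) ∘ₗ (T : V →ₗ[ℝ] V) = LinearMap.id := by
      ext x; simp
    have hid : (LinearMap.id : V →ₗ[ℝ] V) = LinearMap.adjoint LinearMap.id :=
      (LinearMap.eq_adjoint_iff _ _).mpr (by intro x y; simp)
    rw [hcomp, ← hid, LinearMap.id_apply]

/-- A linear injection mapping the cone onto itself sends extreme points to positive
multiples of extreme points. -/
lemma cone_auto_extreme {Ω : Set V} {u : V} (hu : ∀ ω ∈ Ω, ⟪u, ω⟫ = 1)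
    {A : V →ₗ[ℝ] V} (hAinj : Function.Injective A) (hAK : A '' posCone Ω = posCone Ω)
    {ω : V} (hω : ω ∈ Set.extremePoints ℝ Ω) :
    ∃ c : ℝ, 0 < c ∧ ∃ σ, σ ∈ Set.extremePoints ℝ Ω ∧ A ω = c • σ := by
  obtain ⟨hωΩ, hωext⟩ := hω
  have hωK : ω ∈ posCone Ω := subset_posCone Ω hωΩ
  have hAωK : A ω ∈ posCone Ω := by rw [← hAK]; exact ⟨ω, hωK, rfl⟩
  obtain ⟨l, σ, hσΩ, hl, hAω⟩ := hAωK
  have hω0 : ω ≠ 0 := by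
    intro h; have := hu ω hωΩ; rw [h, inner_zero_right] at this; norm_num at this
  have hl0 : l ≠ 0 := by
    intro h
    apply hω0
    apply hAinj
    rw [hAω, h, zero_smul, map_zero]
  have hlpos : 0 < l := lt_of_le_of_ne hl (Ne.symm hl0)
  refine ⟨l, hlpos, σ, ⟨hσΩ, ?_⟩, hAω⟩
  intro x₁ hx₁' x₂ hx₂' hseg
  obtain ⟨a, b, ha, hb, hab, hx⟩ := hseg
  -- pull back x₁ x₂ through A
  have hpre : ∀ x ∈ Ω, ∃ t : ℝ, 0 < t ∧ ∃ τ ∈ Ω, t • A τ = x := by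
    intro x hxΩ
    have hxK : x ∈ posCone Ω := subset_posCone Ω hxΩ
    rw [← hAK] at hxK
    obtain ⟨k, hkK, hkx⟩ := hxK
    obtain ⟨t, τ, hτ, ht, rfl⟩ := hkK
    rw [map_smul] at hkx
    have ht0 : t ≠ 0 := by
      intro h
      rw [h, zero_smul] at hkx
      rw [← hkx] at hxΩ
      have := hu 0 hxΩ; rw [inner_zero_right] at this; norm_num at this
    exact ⟨t, lt_of_le_of_ne ht (Ne.symm ht0), τ, hτ, hkx⟩
  obtain ⟨t₁, ht₁, τ₁, hτ₁, hAτ₁⟩ := hpre x₁ hx₁'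
  obtain ⟨t₂, ht₂, τ₂, hτ₂, hAτ₂⟩ := hpre x₂ hx₂'
  have h1 : A ((l*a*t₁) • τ₁ + (l*b*t₂) • τ₂) = A ω := by
    rw [map_add, map_smul, map_smul, hAω, ← hx, ← hAτ₁, ← hAτ₂]
    module
  have hωeq : ω = (l*a*t₁) • τ₁ + (l*b*t₂) • τ₂ := (hAinj h1).symm
  have hsum : (l*a*t₁) + (l*b*t₂) = 1 := by
    have h3 : ⟪u, ω⟫ = 1 := hu ω hωΩ
    rw [hωeq, inner_add_right, real_inner_smul_right, real_inner_smul_right,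
      hu τ₁ hτ₁, hu τ₂ hτ₂, mul_one, mul_one] at h3
    exact h3
  have hseg' : ω ∈ openSegment ℝ τ₁ τ₂ :=
    ⟨l*a*t₁, l*b*t₂, by positivity, by positivity, hsum, hωeq.symm⟩
  have hτ₁ω := hωext hτ₁ hτ₂ hseg'
  have hτ₂ω := hωext hτ₂ hτ₁ (openSegment_symm ℝ τ₁ τ₂ ▸ hseg')
  have hx₁ : x₁ = (t₁*l) • σ := by
    rw [← hAτ₁, hτ₁ω, hAω, smul_smul]
  have hx₂ : x₂ = (t₂*l) • σ := by
    rw [← hAτ₂, hτ₂ω, hAω, smul_smul]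
  have ht₁l : t₁ * l = 1 := by
    have h3 : ⟪u, x₁⟫ = 1 := hu x₁ hx₁'
    rw [hx₁, real_inner_smul_right, hu σ hσΩ, mul_one] at h3
    exact h3
  have ht₂l : t₂ * l = 1 := by
    have h3 : ⟪u, x₂⟫ = 1 := hu x₂ hx₂'
    rw [hx₂, real_inner_smul_right, hu σ hσΩ, mul_one] at h3
    exact h3
  rw [hx₁, ht₁l, one_smul]

/-- A symmetric positive-definite operator preserving the cone fixes every extreme ray. -/
lemma symm_pos_cone_eigen {Ω : Set V} (hΩ : IsStateSpace Ω)
    (hfin : (Set.extremePoints ℝ Ω).Finite)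
    {A : V →ₗ[ℝ] V} (hAsym : ∀ x y, ⟪A x, y⟫ = ⟪x, A y⟫)
    (hApos : ∀ x, x ≠ 0 → 0 < ⟪A x, x⟫)
    (hAK : A '' posCone Ω = posCone Ω)
    {ω : V} (hω : ω ∈ Set.extremePoints ℝ Ω) :
    ∃ lam : ℝ, 0 < lam ∧ A ω = lam • ω := by
  obtain ⟨u, hu⟩ := exists_unit hΩ
  have hAinj : Function.Injective A := by
    rw [← LinearMap.ker_eq_bot, Submodule.eq_bot_iff]
    intro x hx
    by_contra h
    have h1 := hApos x h
    rw [LinearMap.mem_ker.mp hx, inner_zero_left] at h1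
    exact lt_irrefl 0 h1
  haveI : Finite ↥(Set.extremePoints ℝ Ω) := hfin.to_subtype
  have hstep : ∀ ω' : ↥(Set.extremePoints ℝ Ω), ∃ cc : ℝ, 0 < cc ∧
      ∃ σ' : ↥(Set.extremePoints ℝ Ω), A ω'.1 = cc • σ'.1 := by
    intro ω'
    obtain ⟨cc, hcc, σ', hσ'E, hA⟩ := cone_auto_extreme hu hAinj hAK ω'.2
    exact ⟨cc, hcc, ⟨σ', hσ'E⟩, hA⟩
  choose c hc σ hAc using hstep
  have huE : ∀ ω' : ↥(Set.extremePoints ℝ Ω), ⟪u, ω'.1⟫ = 1 :=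
    fun ω' => hu ω'.1 ω'.2.1
  have hσinj : Function.Injective σ := by
    intro a b h
    have h1 : c b • A a.1 = c a • A b.1 := by
      rw [hAc a, hAc b, h, smul_smul, smul_smul, mul_comm]
    rw [← map_smul, ← map_smul] at h1
    have h2 : c b • a.1 = c a • b.1 := hAinj h1
    have h3 : c b = c a := by
      have := congrArg (fun z => ⟪u, z⟫) h2
      simpa [real_inner_smul_right, huE a, huE b] using this
    rw [h3] at h2
    have h4 : a.1 = b.1 := smul_right_injective V (ne_of_gt (hc a)) h2
    exact Subtype.ext h4
  set p : Equiv.Perm ↥(Set.extremePoints ℝ Ω) :=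
    Equiv.ofBijective σ (Finite.injective_iff_bijective.mp hσinj) with hp
  have hpapp : ∀ x, p x = σ x := fun x => rfl
  set m := orderOf p with hm'
  have hm : 0 < m := orderOf_pos p
  have hiter : ∀ k : ℕ, ∃ γ : ℝ, 0 < γ ∧
      (A ^ k) ω = γ • ((p ^ k) ⟨ω, hω⟩ : ↥(Set.extremePoints ℝ Ω)).1 := by
    intro k
    induction k with
    | zero => exact ⟨1, one_pos, by simp⟩
    | succ k ih =>
      obtain ⟨γ, hγ, hk⟩ := ih
      refine ⟨γ * c ((p ^ k) ⟨ω, hω⟩), mul_pos hγ (hc _), ?_⟩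
      have h1 : (A ^ (k+1)) ω = A ((A ^ k) ω) := by
        rw [pow_succ']; rfl
      have h2 : ((p ^ (k+1)) ⟨ω, hω⟩) = σ ((p ^ k) ⟨ω, hω⟩) := by
        rw [pow_succ']; rfl
      rw [h1, hk, map_smul, hAc ((p ^ k) ⟨ω, hω⟩), h2, smul_smul]
  obtain ⟨γ, hγ, hiterm⟩ := hiter m
  have hAm : (A ^ m) ω = γ • ω := by
    rw [hiterm, hm', pow_orderOf_eq_one p]
    rfl
  set lam := γ ^ ((m:ℝ)⁻¹) with hlam
  have hlampos : 0 < lam := Real.rpow_pos_of_pos hγ _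
  have hlamm : lam ^ m = γ := by
    rw [hlam, ← Real.rpow_natCast (γ ^ ((m:ℝ)⁻¹)) m, ← Real.rpow_mul (le_of_lt hγ),
      inv_mul_cancel₀ (by exact_mod_cast hm.ne'), Real.rpow_one]
  have hpow : ∀ i : ℕ, ∀ x : V, x ≠ 0 → 0 < ⟪(A ^ i) x, x⟫ := by
    intro i
    induction i using Nat.twoStepInduction with
    | zero =>
      intro x hx
      have : (A ^ 0) x = x := rfl
      rw [this, real_inner_self_eq_norm_sq]
      exact pow_pos (norm_pos_iff.mpr hx) 2
    | one =>
      intro x hx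
      rw [pow_one]
      exact hApos x hx
    | more k ihk _ =>
      intro x hx
      have hAx : A x ≠ 0 := fun h => hx (hAinj (by rw [h, map_zero]))
      have h1 : (A ^ (k+2)) x = A ((A ^ k) (A x)) := by
        have : A ^ (k+2) = A * (A ^ k * A) := by
          rw [pow_succ', pow_succ]
        rw [this]
        rfl
      rw [h1, hAsym ((A ^ k) (A x)) x]
      have h2 : ⟪(A ^ k) (A x), A x⟫ = ⟪A x, (A ^ k) (A x)⟫ := real_inner_comm _ _
      calc (0:ℝ) < ⟪(A ^ k) (A x), A x⟫ := ihk (A x) hAx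
        _ = ⟪(A ^ k) (A x), A x⟫ := rfl
  -- the polynomial trick
  set v := A ω - lam • ω with hv
  have hcomm : Commute A (lam • (1 : Module.End ℝ V)) := (Commute.one_right A).smul_right lam
  have hgeo := hcomm.geom_sum₂_mul m
  have hQv : (∑ i ∈ Finset.range m, A ^ i * (lam • (1 : Module.End ℝ V)) ^ (m - 1 - i)) v = 0 := by
    have happ := congrArg (fun (f : Module.End ℝ V) => f ω) hgeo
    simp only [Module.End.mul_apply, LinearMap.sub_apply, LinearMap.smul_apply,
      Module.End.one_apply] at happ
    have hrhs : (A ^ m) ω - ((lam • (1 : Module.End ℝ V)) ^ m) ω = 0 := by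
      rw [smul_pow, one_pow, hAm, LinearMap.smul_apply, Module.End.one_apply, hlamm, sub_self]
    have hlhs : (∑ i ∈ Finset.range m, A ^ i * (lam • (1 : Module.End ℝ V)) ^ (m - 1 - i))
        ((A - lam • (1 : Module.End ℝ V)) ω) =
        (A ^ m) ω - ((lam • (1 : Module.End ℝ V)) ^ m) ω := happ
    have hvform : (A - lam • (1 : Module.End ℝ V)) ω = v := by
      rw [hv]
      simp [LinearMap.sub_apply]
    rw [hvform] at hlhs
    rw [hlhs, hrhs]
  by_cases hv0 : v = 0
  · refine ⟨lam, hlampos, ?_⟩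
    have := sub_eq_zero.mp (hv ▸ hv0)
    exact this
  · exfalso
    have hpos : 0 < ⟪(∑ i ∈ Finset.range m, A ^ i *
        (lam • (1 : Module.End ℝ V)) ^ (m - 1 - i)) v, v⟫ := by
      rw [LinearMap.sum_apply, sum_inner]
      apply Finset.sum_pos
      · intro i _
        have h1 : (A ^ i * (lam • (1 : Module.End ℝ V)) ^ (m - 1 - i)) v =
            lam ^ (m - 1 - i) • ((A ^ i) v) := by
          rw [smul_pow, one_pow]
          show (A ^ i) ((lam ^ (m - 1 - i) • (1 : Module.End ℝ V)) v) = _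
          rw [LinearMap.smul_apply, Module.End.one_apply, map_smul]
        rw [h1, real_inner_smul_left]
        exact mul_pos (pow_pos hlampos _) (hpow i v hv0)
      · exact Finset.nonempty_range_iff.mpr hm.ne'
    rw [hQv, inner_zero_left] at hpos
    exact lt_irrefl 0 hpos

lemma posCone_repr {Ω : Set V} (hΩ : IsStateSpace Ω)
    (hfin : (Set.extremePoints ℝ Ω).Finite) {y : V} (hy : y ∈ posCone Ω) :
    ∃ w : V → ℝ, (∀ ω ∈ hfin.toFinset, 0 ≤ w ω) ∧ y = ∑ ω ∈ hfin.toFinset, w ω • ω := by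
  obtain ⟨l, σ, hσ, hl, rfl⟩ := hy
  have hσ' : σ ∈ convexHull ℝ (Set.extremePoints ℝ Ω) := by
    rw [convexHull_extremePoints_eq hΩ hfin]; exact hσ
  have hcoe : (hfin.toFinset : Set V) = Set.extremePoints ℝ Ω := hfin.coe_toFinset
  rw [← hcoe, Finset.convexHull_eq] at hσ'
  obtain ⟨w, hw0, hw1, hwx⟩ := hσ'
  refine ⟨fun ω => l * w ω, fun ω hω => mul_nonneg hl (hw0 ω hω), ?_⟩
  rw [← hwx, Finset.centerMass_eq_of_sum_1 _ id hw1, Finset.smul_sum]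
  congr 1
  funext ω
  rw [smul_smul, id]

lemma sum_mem_posCone {Ω : Set V} (hΩ : IsStateSpace Ω) (t : Finset V) (ht : ↑t ⊆ Ω)
    (w : V → ℝ) (hw : ∀ ω ∈ t, 0 ≤ w ω) : (∑ ω ∈ t, w ω • ω) ∈ posCone Ω := by
  obtain ⟨⟨ω₀, hω₀⟩, _, hconv, _, _⟩ := hΩ
  refine Finset.sum_induction _ (· ∈ posCone Ω)
    (fun a b ha hb => posCone_add_mem hconv ha hb) ⟨0, ω₀, hω₀, le_refl 0, (zero_smul ℝ ω₀).symm⟩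
    (fun ω hω => ⟨w ω, ω, ht hω, hw ω hω, rfl⟩)


end AuxLemmas

/-- **Proposition 4 (paper).** A transitive state space with finitely many extreme points
whose positive cone is self-dual with respect to some inner product can be linearly
transformed so as to be self-dual with respect to the `GL(Ω')`-averaged (invariant)
Euclidean inner product. -/
theorem transitive_selfDual_representation
    {N : ℕ} {Ω : Set (EuclideanSpace ℝ (Fin (N + 1)))}
    (hΩ : IsStateSpace Ω) (htrans : IsTransitive Ω)
    (hfinext : (Set.extremePoints ℝ Ω).Finite)
    (hsd : ∃ B : EuclideanSpace ℝ (Fin (N + 1)) →ₗ[ℝ] EuclideanSpace ℝ (Fin (N + 1)) →ₗ[ℝ] ℝ,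
      (∀ x y, B x y = B y x) ∧ (∀ x, x ≠ 0 → 0 < B x x) ∧
      posCone Ω = {y | ∀ x ∈ posCone Ω, 0 ≤ B x y}) :
    ∃ Ξ : EuclideanSpace ℝ (Fin (N + 1)) ≃ₗ[ℝ] EuclideanSpace ℝ (Fin (N + 1)),
      IsStateSpace (Ξ '' Ω) ∧ IsTransitive (Ξ '' Ω) ∧
      ∃ hfin : (autGroup (Ξ '' Ω)).Finite,
        posCone (Ξ '' Ω) = {y | ∀ x ∈ posCone (Ξ '' Ω),
          0 ≤ (hfin.toFinset.card : ℝ)⁻¹ * ∑ T ∈ hfin.toFinset, ⟪T x, T y⟫} := by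
  classical
  obtain ⟨B, hBsymm, hBpos, hBsd⟩ := hsd
  obtain ⟨Ξ, hΞ⟩ := exists_inner_equiv B hBsymm hBpos
  refine ⟨Ξ, isStateSpace_image hΩ Ξ, isTransitive_image htrans Ξ, ?_⟩
  set Ω' : Set (EuclideanSpace ℝ (Fin (N + 1))) := Ξ '' Ω with hΩ'def
  have hΩ's : IsStateSpace Ω' := isStateSpace_image hΩ Ξ
  have hfin' : (Set.extremePoints ℝ Ω').Finite := by
    rw [hΩ'def, ← image_extremePoints]
    exact hfinext.image Ξ
  have hfinG : (autGroup Ω').Finite := autGroup_finite hΩ's hfin'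
  refine ⟨hfinG, ?_⟩
  have hsd' : posCone Ω' = {y | ∀ x ∈ posCone Ω', 0 ≤ ⟪x, y⟫} :=
    selfdual_transport B hBsd Ξ hΞ
  have hid : (LinearEquiv.refl ℝ (EuclideanSpace ℝ (Fin (N + 1)))) ∈ autGroup Ω' := by
    show (LinearEquiv.refl ℝ (EuclideanSpace ℝ (Fin (N + 1)))) '' Ω' = Ω'
    exact Set.image_id Ω'
  have hGne : hfinG.toFinset.Nonempty := ⟨_, hfinG.mem_toFinset.mpr hid⟩
  have hcardpos : (0:ℝ) < (hfinG.toFinset.card : ℝ) := by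
    exact_mod_cast Finset.card_pos.mpr hGne
  ext y
  constructor
  · intro hy x hx
    have hterm : ∀ T ∈ hfinG.toFinset, (0:ℝ) ≤ ⟪T x, T y⟫ := by
      intro T hT
      have hTG := hfinG.mem_toFinset.mp hT
      have hTx : T x ∈ posCone Ω' := by
        rw [← autGroup_posCone hTG]; exact ⟨x, hx, rfl⟩
      have hTy : T y ∈ posCone Ω' := by
        rw [← autGroup_posCone hTG]; exact ⟨y, hy, rfl⟩
      exact posCone_pair_nonneg hsd' hTx hTy
    exact mul_nonneg (inv_nonneg.mpr hcardpos.le) (Finset.sum_nonneg hterm)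
  · intro hy
    set P : (EuclideanSpace ℝ (Fin (N + 1))) →ₗ[ℝ] (EuclideanSpace ℝ (Fin (N + 1))) := ∑ T ∈ hfinG.toFinset,
      (LinearMap.adjoint (T : (EuclideanSpace ℝ (Fin (N + 1))) →ₗ[ℝ] (EuclideanSpace ℝ (Fin (N + 1))))) ∘ₗ (T : (EuclideanSpace ℝ (Fin (N + 1))) →ₗ[ℝ] (EuclideanSpace ℝ (Fin (N + 1)))) with hP
    have hPinner : ∀ x z : (EuclideanSpace ℝ (Fin (N + 1))), ⟪x, P z⟫ = ∑ T ∈ hfinG.toFinset, ⟪T x, T z⟫ := by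
      intro x z
      rw [hP, LinearMap.sum_apply, inner_sum]
      apply Finset.sum_congr rfl
      intro T _
      rw [LinearMap.comp_apply, LinearMap.adjoint_inner_right]
      rfl
    have hPyK : P y ∈ posCone Ω' := by
      rw [hsd']
      intro x hx
      rw [hPinner x y]
      have h2 := hy x hx
      by_contra hneg
      push_neg at hneg
      have := mul_neg_of_pos_of_neg (inv_pos.mpr hcardpos) hneg
      linarith
    -- eigenvalues
    have heig : ∀ ω ∈ hfin'.toFinset, ∃ lam : ℝ, 0 < lam ∧ P ω = lam • ω := by
      intro ω hω
      have hωE : ω ∈ Set.extremePoints ℝ Ω' := hfin'.mem_toFinset.mp hω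
      have hTe : ∀ T ∈ hfinG.toFinset, ∃ lam : ℝ, 0 < lam ∧
          ((LinearMap.adjoint (T : (EuclideanSpace ℝ (Fin (N + 1))) →ₗ[ℝ] (EuclideanSpace ℝ (Fin (N + 1))))) ∘ₗ (T : (EuclideanSpace ℝ (Fin (N + 1))) →ₗ[ℝ] (EuclideanSpace ℝ (Fin (N + 1))))) ω = lam • ω := by
        intro T hT
        have hTG := hfinG.mem_toFinset.mp hT
        set A : (EuclideanSpace ℝ (Fin (N + 1))) →ₗ[ℝ] (EuclideanSpace ℝ (Fin (N + 1))) :=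
          (LinearMap.adjoint (T : (EuclideanSpace ℝ (Fin (N + 1))) →ₗ[ℝ] (EuclideanSpace ℝ (Fin (N + 1))))) ∘ₗ (T : (EuclideanSpace ℝ (Fin (N + 1))) →ₗ[ℝ] (EuclideanSpace ℝ (Fin (N + 1)))) with hA
        have hAsym : ∀ x z : (EuclideanSpace ℝ (Fin (N + 1))), ⟪A x, z⟫ = ⟪x, A z⟫ := by
          intro x z
          rw [hA, LinearMap.comp_apply, LinearMap.comp_apply,
            LinearMap.adjoint_inner_left, LinearMap.adjoint_inner_right]
        have hApos : ∀ x : (EuclideanSpace ℝ (Fin (N + 1))), x ≠ 0 → 0 < ⟪A x, x⟫ := by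
          intro x hx
          rw [hA, LinearMap.comp_apply, LinearMap.adjoint_inner_left]
          have hTx : (T : (EuclideanSpace ℝ (Fin (N + 1))) →ₗ[ℝ] (EuclideanSpace ℝ (Fin (N + 1)))) x ≠ 0 := by
            intro h
            apply hx
            have := congrArg T.symm h
            simpa using this
          rw [real_inner_self_eq_norm_sq]
          exact pow_pos (norm_pos_iff.mpr hTx) 2
        have hAK : A '' posCone Ω' = posCone Ω' := by
          rw [hA, LinearMap.coe_comp, Set.image_comp]
          have h1 : (T : (EuclideanSpace ℝ (Fin (N + 1))) →ₗ[ℝ] (EuclideanSpace ℝ (Fin (N + 1)))) '' posCone Ω' = posCone Ω' := autGroup_posCone hTG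
          rw [h1, adjoint_posCone_image hsd' hTG]
        exact symm_pos_cone_eigen hΩ's hfin' hAsym hApos hAK hωE
      choose! lam hlampos hlameq using hTe
      refine ⟨∑ T ∈ hfinG.toFinset, lam T, ?_, ?_⟩
      · exact Finset.sum_pos (fun T hT => hlampos T hT) hGne
      · rw [hP, LinearMap.sum_apply, Finset.sum_smul]
        exact Finset.sum_congr rfl fun T hT => hlameq T hT
    choose! Lam hLampos hLameq using heig
    -- representation of P y
    obtain ⟨w, hw0, hwrep⟩ := posCone_repr hΩ's hfin' hPyK
    set y' : (EuclideanSpace ℝ (Fin (N + 1))) := ∑ ω ∈ hfin'.toFinset, (w ω / Lam ω) • ω with hy'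
    have hy'K : y' ∈ posCone Ω' := by
      apply sum_mem_posCone hΩ's
      · intro ω hω
        exact (hfin'.mem_toFinset.mp (by exact_mod_cast hω)).1
      · intro ω hω
        exact div_nonneg (hw0 ω hω) (hLampos ω hω).le
    have hPy' : P y' = P y := by
      rw [hy', map_sum, hwrep]
      apply Finset.sum_congr rfl
      intro ω hω
      rw [map_smul, hLameq ω hω, smul_smul, div_mul_cancel₀ _ (hLampos ω hω).ne']
    have hPinj : Function.Injective P := by
      rw [← LinearMap.ker_eq_bot, Submodule.eq_bot_iff]
      intro x hx
      have hx0 : P x = 0 := LinearMap.mem_ker.mp hx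
      have h1 : ⟪x, P x⟫ = ∑ T ∈ hfinG.toFinset, ⟪T x, T x⟫ := hPinner x x
      rw [hx0, inner_zero_right] at h1
      have h2 : ⟪(LinearEquiv.refl ℝ (EuclideanSpace ℝ (Fin (N + 1)))) x, (LinearEquiv.refl ℝ (EuclideanSpace ℝ (Fin (N + 1)))) x⟫ ≤
          ∑ T ∈ hfinG.toFinset, ⟪T x, T x⟫ := by
        apply Finset.single_le_sum (f := fun T : (EuclideanSpace ℝ (Fin (N + 1))) ≃ₗ[ℝ] (EuclideanSpace ℝ (Fin (N + 1))) => ⟪T x, T x⟫)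
        · intro T _
          exact real_inner_self_nonneg
        · exact hfinG.mem_toFinset.mpr hid
      rw [← h1] at h2
      have h3 : ⟪x, x⟫ ≤ (0:ℝ) := by simpa using h2
      exact real_inner_self_nonpos.mp h3
    have : y = y' := hPinj (hPy'.symm)
    rw [this]
    exact hy'K
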